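/- If 0 ≤ x n < α for all n ≥ 1, (α − x n)³ * n² → γ with γ > 0, and for every n ≥ 1 the provider's asymptotic first-order condition w_av/(1 + x n)² = (α + x n)/((α − x n)³ * n²) holds, then necessarily γ = 2α(1 + α)²/w_av. -/

import Mathlib

open Filter

/-- If the provider's asymptotic first-order condition
`w_av/(1 + x n)² = (α + x n)/((α - x n)³ n²)` holds along the sequence, then the
limit `γ` of `(α - x n)³ n²` must equal `2α(1 + α)²/w_av`. -/
theorem gamma_determined_by_first_order_condition
    (α γ wav : ℝ) (hα : 0 < α) (hγ : 0 < γ) (hwav : 0 < wav)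
    (x : ℕ → ℝ) (hx : ∀ n : ℕ, 1 ≤ n → 0 ≤ x n ∧ x n < α)
    (hlim : Tendsto (fun n : ℕ => (α - x n) ^ 3 * (n : ℝ) ^ 2) atTop (nhds γ))
    (hfoc : ∀ n : ℕ, 1 ≤ n →
      wav / (1 + x n) ^ 2 = (α + x n) / ((α - x n) ^ 3 * (n : ℝ) ^ 2)) :
    γ = 2 * α * (1 + α) ^ 2 / wav := by
  -- Step 1: (α - x n)^3 → 0
  have hinv : Tendsto (fun n : ℕ => (1 : ℝ) / (n : ℝ) ^ 2) atTop (nhds 0) := by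
    have h1 : Tendsto (fun n : ℕ => (1 : ℝ) / (n : ℝ)) atTop (nhds 0) :=
      tendsto_one_div_atTop_nhds_zero_nat
    have := h1.mul h1
    simpa [div_mul_div_comm, pow_two] using this
  have hcube : Tendsto (fun n : ℕ => (α - x n) ^ 3) atTop (nhds 0) := by
    have h := hlim.mul hinv
    rw [mul_zero] at h
    apply h.congr'
    filter_upwards [eventually_ge_atTop 1] with n hn
    have hn' : (n : ℝ) ≠ 0 := by positivity
    field_simp
  -- Step 2: α - x n → 0 via cube root
  have hroot : Tendsto (fun n : ℕ => α - x n) atTop (nhds 0) := by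
    have hc : ContinuousAt (fun y : ℝ => y ^ (3⁻¹ : ℝ)) 0 :=
      Real.continuousAt_rpow_const 0 (3⁻¹ : ℝ) (Or.inr (by norm_num))
    have h := (hc.tendsto.comp hcube)
    rw [show ((0 : ℝ) ^ (3⁻¹ : ℝ)) = 0 by simp [Real.zero_rpow]] at h
    apply h.congr'
    filter_upwards [eventually_ge_atTop 1] with n hn
    have hnn : 0 ≤ α - x n := by linarith [(hx n hn).2]
    simp only [Function.comp]
    rw [← Real.rpow_natCast (α - x n) 3, ← Real.rpow_mul hnn]
    norm_num
  have hxlim : Tendsto x atTop (nhds α) := by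
    have h := (tendsto_const_nhds : Tendsto (fun _ : ℕ => α) atTop (nhds α)).sub hroot
    simpa using h
  -- Step 3: eventually (α - x n)^3 n^2 = (α + x n)(1 + x n)^2 / wav
  have heq : ∀ᶠ n : ℕ in atTop,
      (α - x n) ^ 3 * (n : ℝ) ^ 2 = (α + x n) * (1 + x n) ^ 2 / wav := by
    filter_upwards [eventually_ge_atTop 1] with n hn
    obtain ⟨h0, h1⟩ := hx n hn
    have hD : (α - x n) ^ 3 * (n : ℝ) ^ 2 ≠ 0 := by
      have : (0:ℝ) < α - x n := by linarith
      have hn' : (0:ℝ) < (n : ℝ) := by exact_mod_cast hn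
      positivity
    have hone : (1 + x n) ^ 2 ≠ 0 := by positivity
    have := hfoc n hn
    field_simp at this ⊢
    rw [eq_div_iff (pow_ne_zero 3 (sub_pos.mpr h1).ne')] at this
    linear_combination this
  -- Step 4: RHS tends to 2α(1+α)²/wav
  have hrhs : Tendsto (fun n : ℕ => (α + x n) * (1 + x n) ^ 2 / wav) atTop
      (nhds (2 * α * (1 + α) ^ 2 / wav)) := by
    have h1 : Tendsto (fun n : ℕ => (α + x n)) atTop (nhds (α + α)) :=
      tendsto_const_nhds.add hxlim
    have h2 : Tendsto (fun n : ℕ => (1 + x n) ^ 2) atTop (nhds ((1 + α) ^ 2)) :=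
      (tendsto_const_nhds.add hxlim).pow 2
    have := (h1.mul h2).div_const wav
    convert this using 2
    ring
  exact tendsto_nhds_unique (hlim.congr' heq) hrhs
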